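/- In a unimodular cocommutative Hopf algebra H in a symmetric monoidal category, the pairing l ∘ μ is symmetric: l ∘ μ ∘ γ = l ∘ μ. -/

import Mathlib

open CategoryTheory MonoidalCategory

namespace PairingSymmetricAux

universe v u
variable {C : Type u} [Category.{v} C] [MonoidalCategory C] [SymmetricCategory C]

/-- Cancellation in the convolution monoid. -/
lemma conv_cancel {X Y : C} (M : ComonObj X) (N : MonObj Y) (b a c : X ⟶ Y)
    (h1 : M.comul ≫ (b ▷ X) ≫ (Y ◁ a) ≫ N.mul = M.counit ≫ N.one)
    (h2 : M.comul ≫ (a ▷ X) ≫ (Y ◁ c) ≫ N.mul = M.counit ≫ N.one) : b = c := by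
  letI := M; letI := N
  refine left_inv_eq_right_inv (M := Conv X Y) (a := a) ?_ ?_
  · show M.comul ≫ (b ▷ X) ≫ (Y ◁ a) ≫ N.mul = M.counit ≫ N.one
    exact h1
  · show M.comul ≫ (a ▷ X) ≫ (Y ◁ c) ≫ N.mul = M.counit ≫ N.one
    exact h2

/-- Package the data as a Hopf monoid object in `C`. -/
@[simps] def myHopf (H : C) (μ : H ⊗ H ⟶ H) (η : 𝟙_ C ⟶ H) (Δ : H ⟶ H ⊗ H) (ε : H ⟶ 𝟙_ C)
    (S : H ⟶ H)
    (mul_assoc' : (μ ▷ H) ≫ μ = (α_ H H H).hom ≫ (H ◁ μ) ≫ μ)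
    (one_mul' : (η ▷ H) ≫ μ = (λ_ H).hom)
    (mul_one' : (H ◁ η) ≫ μ = (ρ_ H).hom)
    (comul_assoc' : Δ ≫ (Δ ▷ H) ≫ (α_ H H H).hom = Δ ≫ (H ◁ Δ))
    (counit_comul' : Δ ≫ (ε ▷ H) = (λ_ H).inv)
    (comul_counit' : Δ ≫ (H ◁ ε) = (ρ_ H).inv)
    (mul_comul' : μ ≫ Δ = (Δ ⊗ₘ Δ) ≫ tensorμ H H H H ≫ (μ ⊗ₘ μ))
    (mul_counit' : μ ≫ ε = (ε ⊗ₘ ε) ≫ (λ_ (𝟙_ C)).hom)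
    (one_comul' : η ≫ Δ = (λ_ (𝟙_ C)).inv ≫ (η ⊗ₘ η))
    (one_counit' : η ≫ ε = 𝟙 (𝟙_ C))
    (antipode_l : Δ ≫ (S ▷ H) ≫ μ = ε ≫ η)
    (antipode_r : Δ ≫ (H ◁ S) ≫ μ = ε ≫ η) : HopfObj H where
  one := η
  mul := μ
  one_mul := one_mul'
  mul_one := mul_one'
  mul_assoc := mul_assoc'
  counit := ε
  comul := Δ
  counit_comul := counit_comul'
  comul_counit := comul_counit'
  comul_assoc := comul_assoc'.symm
  mul_comul := mul_comul'
  one_comul := one_comul'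
  mul_counit := mul_counit'
  one_counit := one_counit'
  antipode := S
  antipode_left := antipode_l
  antipode_right := antipode_r

lemma scalar_comm {X Z B : C} (s : X ⊗ Z ⟶ 𝟙_ C) (t : B ⟶ 𝟙_ C) :
    (X ◁ (Z ◁ t)) ≫ (X ◁ (ρ_ Z).hom) ≫ s = (α_ X Z B).inv ≫ (s ▷ B) ≫ (λ_ B).hom ≫ t := by
  rw [← leftUnitor_naturality]
  rw [← whisker_exchange_assoc]
  monoidal

lemma scalar_comm2 {X B : C} (s : X ⟶ 𝟙_ C) (t : B ⟶ 𝟙_ C) :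
    (X ◁ t) ≫ (ρ_ X).hom ≫ s = (s ▷ B) ≫ (λ_ B).hom ≫ t := by
  rw [← rightUnitor_naturality]
  rw [whisker_exchange_assoc]
  monoidal

lemma scalar_slide {A : C} (s : A ⟶ 𝟙_ C) (Z : C) :
    (β_ A Z).hom ≫ (Z ◁ s) ≫ (ρ_ Z).hom = (s ▷ Z) ≫ (λ_ Z).hom := by
  rw [← BraidedCategory.braiding_naturality_left_assoc, braiding_rightUnitor]

lemma slide3 {H : C} (s : H ⊗ H ⟶ 𝟙_ C) :
    (α_ H H H).inv ≫ ((β_ H H).hom ▷ H) ≫ (α_ H H H).hom ≫ (H ◁ s) ≫ (ρ_ H).hom =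
    (H ◁ (β_ H H).hom) ≫ (α_ H H H).inv ≫ (s ▷ H) ≫ (λ_ H).hom := by
  rw [← scalar_slide s H, BraidedCategory.braiding_tensor_left_hom]
  simp only [Category.assoc, Iso.inv_hom_id_assoc]
  rw [← MonoidalCategory.whiskerLeft_comp_assoc, SymmetricCategory.symmetry]
  simp

lemma slide3' {H : C} (s : H ⊗ H ⟶ 𝟙_ C) :
    (α_ H H H).hom ≫ (H ◁ (β_ H H).hom) ≫ (α_ H H H).inv ≫ (s ▷ H) ≫ (λ_ H).hom =
    ((β_ H H).hom ▷ H) ≫ (α_ H H H).hom ≫ (H ◁ s) ≫ (ρ_ H).hom := by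
  rw [← scalar_slide s H, BraidedCategory.braiding_tensor_left_hom]
  simp only [Category.assoc, Iso.inv_hom_id_assoc]
  rw [← MonoidalCategory.whiskerLeft_comp_assoc, SymmetricCategory.symmetry]
  simp

section
variable {H : C} (μ : H ⊗ H ⟶ H) (Δ : H ⟶ H ⊗ H) (l : H ⟶ 𝟙_ C) (L : 𝟙_ C ⟶ H)

/-- `y ↦ Σ l(L₁ y) L₂` -/
noncomputable def uu : H ⟶ H :=
  (λ_ H).inv ≫ ((L ≫ Δ) ▷ H) ≫ (α_ H H H).hom ≫ (H ◁ (β_ H H).hom) ≫ (α_ H H H).inv ≫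
    ((μ ≫ l) ▷ H) ≫ (λ_ H).hom

/-- `z ↦ Σ l(z L₂) L₁` -/
noncomputable def vv : H ⟶ H :=
  (ρ_ H).inv ≫ (H ◁ (L ≫ Δ)) ≫ (α_ H H H).inv ≫ ((β_ H H).hom ▷ H) ≫ (α_ H H H).hom ≫
    (H ◁ (μ ≫ l)) ≫ (ρ_ H).hom

lemma uu_alt : uu μ Δ l L =
    (λ_ H).inv ≫ ((L ≫ Δ ≫ (β_ H H).hom) ▷ H) ≫ (α_ H H H).hom ≫ (H ◁ (μ ≫ l)) ≫ (ρ_ H).hom := by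
  have h := slide3' (μ ≫ l)
  unfold uu
  simp only [comp_whiskerRight, MonoidalCategory.whiskerLeft_comp, Category.assoc] at h ⊢
  rw [h]

lemma vv_alt : vv μ Δ l L =
    (ρ_ H).inv ≫ (H ◁ (L ≫ Δ ≫ (β_ H H).hom)) ≫ (α_ H H H).inv ≫ ((μ ≫ l) ▷ H) ≫ (λ_ H).hom := by
  have h := slide3 (μ ≫ l)
  unfold vv
  simp only [comp_whiskerRight, MonoidalCategory.whiskerLeft_comp, Category.assoc] at h ⊢
  rw [h]

noncomputable def dmid : H ⊗ H ⟶ 𝟙_ C :=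
  (H ◁ ((λ_ H).inv ≫ ((L ≫ Δ ≫ (β_ H H).hom) ▷ H) ≫ (α_ H H H).hom)) ≫ (α_ H H (H ⊗ H)).inv ≫
    ((μ ≫ l) ▷ (H ⊗ H)) ≫ (λ_ (H ⊗ H)).hom ≫ μ ≫ l

lemma dA : ((vv μ Δ l L) ▷ H) ≫ μ ≫ l = dmid μ Δ l L := by
  rw [vv_alt]
  simp only [dmid, MonoidalCategory.tensorHom_def, comp_whiskerRight, MonoidalCategory.whiskerLeft_comp,
    Category.assoc, whisker_assoc]
  monoidal

lemma dB : (H ◁ (uu μ Δ l L)) ≫ μ ≫ l = dmid μ Δ l L := by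
  have inst := scalar_comm (X := H) (Z := H) (B := H ⊗ H) (μ ≫ l) (μ ≫ l)
  rw [uu_alt]
  simp only [dmid, MonoidalCategory.tensorHom_def, comp_whiskerRight, MonoidalCategory.whiskerLeft_comp,
    Category.assoc, whisker_assoc] at inst ⊢
  rw [inst]

/-- fusion for `u ∗ id` -/
lemma fuseB : ((uu μ Δ l L) ▷ H) ≫ μ =
    (λ_ (H ⊗ H)).inv ≫ ((L ≫ Δ) ▷ (H ⊗ H)) ≫ tensorμ H H H H ≫ (μ ⊗ₘ μ) ≫ (l ▷ H) ≫ (λ_ H).hom := by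
  simp only [uu, tensorμ, MonoidalCategory.tensorHom_def, comp_whiskerRight, MonoidalCategory.whiskerLeft_comp,
    Category.assoc, whisker_assoc]
  rw [whisker_exchange_assoc]
  monoidal

lemma headB (Δ' : H ⟶ H ⊗ H) : Δ' ≫ (λ_ (H ⊗ H)).inv ≫ ((L ≫ Δ) ▷ (H ⊗ H)) =
    (λ_ H).inv ≫ (L ▷ H) ≫ (Δ ⊗ₘ Δ') := by
  simp only [comp_whiskerRight, MonoidalCategory.tensorHom_def, Category.assoc]
  simp only [← whisker_exchange_assoc, ← whisker_exchange]
  monoidal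

/-- fusion for `id ∗ vv` -/
lemma fuseF2 : Δ ≫ (H ◁ (vv μ Δ l L)) ≫ μ =
    (ρ_ H).inv ≫ (H ◁ L) ≫ (Δ ⊗ₘ Δ) ≫ tensorμ H H H H ≫ (μ ⊗ₘ μ) ≫ (H ◁ l) ≫ (ρ_ H).hom := by
  have aux : (Δ : H ⟶ H ⊗ H) ≫ (H ◁ (ρ_ H).inv) ≫ (H ◁ (H ◁ L)) =
      (ρ_ H).inv ≫ (H ◁ L) ≫ (Δ ▷ H) ≫ (α_ H H H).hom := by
    rw [whisker_exchange_assoc]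
    monoidal
  have aux2 : (Δ ▷ H) ≫ (α_ H H H).hom ≫ (H ◁ (H ◁ Δ)) =
      (H ◁ Δ) ≫ (Δ ▷ (H ⊗ H)) ≫ (α_ H H (H ⊗ H)).hom := by
    rw [whisker_exchange_assoc]
    monoidal
  simp only [vv, MonoidalCategory.whiskerLeft_comp, Category.assoc]
  rw [reassoc_of% aux]
  rw [reassoc_of% aux2]
  simp only [tensorμ, MonoidalCategory.tensorHom_def, comp_whiskerRight, MonoidalCategory.whiskerLeft_comp,
    Category.assoc, whisker_assoc]
  simp only [← whisker_exchange_assoc, ← whisker_exchange]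
  monoidal

/-- fusion for `uu ≫ l` (crossing-free form) -/
lemma fuseC : ((λ_ H).inv ≫ ((L ≫ Δ) ▷ H) ≫ (α_ H H H).hom ≫ (H ◁ (μ ≫ l)) ≫ (ρ_ H).hom) ≫ l =
    (λ_ H).inv ≫ ((L ≫ Δ ≫ (l ▷ H) ≫ (λ_ H).hom) ▷ H) ≫ μ ≫ l := by
  have inst := scalar_comm2 (X := H) (B := H ⊗ H) l (μ ≫ l)
  simp only [comp_whiskerRight, MonoidalCategory.whiskerLeft_comp, Category.assoc,
    whisker_assoc] at inst ⊢
  rw [inst]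
  monoidal

end
end PairingSymmetricAux

open PairingSymmetricAux in
/-- In a unimodular cocommutative Hopf algebra in a symmetric monoidal category, the pairing `l ∘ μ` is symmetric: `l ∘ μ ∘ γ = l ∘ μ`. -/
theorem pairing_symmetric
    {C : Type*} [Category C] [MonoidalCategory C] [SymmetricCategory C]
    (H : C) (μ : H ⊗ H ⟶ H) (η : 𝟙_ C ⟶ H) (Δ : H ⟶ H ⊗ H) (ε : H ⟶ 𝟙_ C)
    (S : H ⟶ H) (l : H ⟶ 𝟙_ C) (L : 𝟙_ C ⟶ H)
    (mul_assoc' : (μ ▷ H) ≫ μ = (α_ H H H).hom ≫ (H ◁ μ) ≫ μ)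
    (one_mul' : (η ▷ H) ≫ μ = (λ_ H).hom)
    (mul_one' : (H ◁ η) ≫ μ = (ρ_ H).hom)
    (comul_assoc' : Δ ≫ (Δ ▷ H) ≫ (α_ H H H).hom = Δ ≫ (H ◁ Δ))
    (counit_comul' : Δ ≫ (ε ▷ H) = (λ_ H).inv)
    (comul_counit' : Δ ≫ (H ◁ ε) = (ρ_ H).inv)
    (mul_comul' : μ ≫ Δ = (Δ ⊗ₘ Δ) ≫ tensorμ H H H H ≫ (μ ⊗ₘ μ))
    (mul_counit' : μ ≫ ε = (ε ⊗ₘ ε) ≫ (λ_ (𝟙_ C)).hom)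
    (one_comul' : η ≫ Δ = (λ_ (𝟙_ C)).inv ≫ (η ⊗ₘ η))
    (one_counit' : η ≫ ε = 𝟙 (𝟙_ C))
    (cocomm : Δ ≫ (β_ H H).hom = Δ)
    (antipode_l : Δ ≫ (S ▷ H) ≫ μ = ε ≫ η)
    (antipode_r : Δ ≫ (H ◁ S) ≫ μ = ε ≫ η)
    (integral_l : (L ▷ H) ≫ μ = (λ_ H).hom ≫ ε ≫ L)
    (integral_r : (H ◁ L) ≫ μ = (ρ_ H).hom ≫ ε ≫ L)
    (cointegral_l : Δ ≫ (l ▷ H) ≫ (λ_ H).hom = l ≫ η)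
    (cointegral_r : Δ ≫ (H ◁ l) ≫ (ρ_ H).hom = l ≫ η)
    (normalization : L ≫ l = 𝟙 (𝟙_ C)) :
    (β_ H H).hom ≫ μ ≫ l = μ ≫ l := by
  -- Mathlib facts about the antipode, via the `Hopf_` object
  have mas : μ ≫ S = (S ⊗ₘ S) ≫ (β_ H H).hom ≫ μ := by
    simpa using @HopfObj.mul_antipode C _ _ _ H (myHopf H μ η Δ ε S mul_assoc' one_mul' mul_one' comul_assoc'
      counit_comul' comul_counit' mul_comul' mul_counit' one_comul' one_counit'
      antipode_l antipode_r)
  have ona : η ≫ S = η := by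
    simpa using @HopfObj.one_antipode C _ _ _ H (myHopf H μ η Δ ε S mul_assoc' one_mul' mul_one' comul_assoc'
      counit_comul' comul_counit' mul_comul' mul_counit' one_comul' one_counit'
      antipode_l antipode_r)
  let M : ComonObj H := ⟨ε, Δ, counit_comul', comul_counit', comul_assoc'.symm⟩
  let N : MonObj H := ⟨η, μ, one_mul', mul_one', mul_assoc'⟩
  -- the antipode is an involution (cocommutative case)
  have sq : S ≫ S = 𝟙 H := by
    refine (conv_cancel M N (𝟙 H) S (S ≫ S) ?_ ?_).symm
    · show Δ ≫ ((𝟙 H) ▷ H) ≫ (H ◁ S) ≫ μ = ε ≫ η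
      simpa using antipode_r
    · show Δ ≫ (S ▷ H) ≫ (H ◁ (S ≫ S)) ≫ μ = ε ≫ η
      rw [← tensorHom_def_assoc, ← cocomm, Category.assoc,
        ← BraidedCategory.braiding_naturality_assoc,
        show ((S ≫ S) ⊗ₘ S) = (S ⊗ₘ 𝟙 H) ≫ (S ⊗ₘ S) by rw [tensorHom_comp_tensorHom]; simp,
        Category.assoc, ← mas, tensorHom_id, reassoc_of% antipode_l, ona]
  -- Fourier identities `uu = S` and `vv = S`
  have r1 : uu μ Δ l L = S := by
    refine conv_cancel M N _ (𝟙 H) S ?_ ?_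
    · show Δ ≫ ((uu μ Δ l L) ▷ H) ≫ (H ◁ (𝟙 H)) ≫ μ = ε ≫ η
      simp only [MonoidalCategory.whiskerLeft_id, Category.id_comp]
      rw [fuseB, reassoc_of% (headB (Δ := Δ) (L := L) Δ), ← reassoc_of% mul_comul',
        cointegral_l, reassoc_of% integral_l, Iso.inv_hom_id_assoc,
        reassoc_of% normalization]
    · show Δ ≫ ((𝟙 H) ▷ H) ≫ (H ◁ S) ≫ μ = ε ≫ η
      simpa using antipode_r
  have r3 : vv μ Δ l L = S := by
    refine (conv_cancel M N S (𝟙 H) _ ?_ ?_).symm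
    · show Δ ≫ (S ▷ H) ≫ (H ◁ (𝟙 H)) ≫ μ = ε ≫ η
      simpa using antipode_l
    · show Δ ≫ ((𝟙 H) ▷ H) ≫ (H ◁ (vv μ Δ l L)) ≫ μ = ε ≫ η
      simp only [id_whiskerRight, Category.id_comp]
      rw [fuseF2, ← reassoc_of% mul_comul', cointegral_r, reassoc_of% integral_r,
        Iso.inv_hom_id_assoc, reassoc_of% normalization]
  -- `l` is invariant under the antipode
  have lS : S ≫ l = l := by
    have fc := fuseC μ Δ l L
    rw [cointegral_l, reassoc_of% normalization] at fc
    rw [← r1, uu_alt, cocomm]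
    simp only [Category.assoc] at fc ⊢
    rw [fc, reassoc_of% one_mul', Iso.inv_hom_id_assoc]
  -- unimodularity: one-sided antipode can switch sides in the pairing
  have dia : (S ▷ H) ≫ μ ≫ l = (H ◁ S) ≫ μ ≫ l := by
    calc (S ▷ H) ≫ μ ≫ l = ((vv μ Δ l L) ▷ H) ≫ μ ≫ l := by rw [r3]
      _ = dmid μ Δ l L := dA μ Δ l L
      _ = (H ◁ (uu μ Δ l L)) ≫ μ ≫ l := (dB μ Δ l L).symm
      _ = (H ◁ S) ≫ μ ≫ l := by rw [r1]
  -- symmetry of the twisted pairing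
  have star : (H ◁ S) ≫ μ ≫ l = (β_ H H).hom ≫ (H ◁ S) ≫ μ ≫ l := by
    conv_lhs => rw [← lS]
    rw [reassoc_of% mas, tensorHom_def']
    simp only [Category.assoc]
    rw [← MonoidalCategory.whiskerLeft_comp_assoc, sq,
      MonoidalCategory.whiskerLeft_id, Category.id_comp,
      BraidedCategory.braiding_naturality_left_assoc]
  -- conclusion
  calc (β_ H H).hom ≫ μ ≫ l
      = (β_ H H).hom ≫ (H ◁ (S ≫ S)) ≫ μ ≫ l := by rw [sq]; simp
    _ = (β_ H H).hom ≫ (H ◁ S) ≫ (H ◁ S) ≫ μ ≫ l := by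
        simp [MonoidalCategory.whiskerLeft_comp]
    _ = (S ▷ H) ≫ (β_ H H).hom ≫ (H ◁ S) ≫ μ ≫ l := by
        rw [← BraidedCategory.braiding_naturality_left_assoc]
    _ = (S ▷ H) ≫ (H ◁ S) ≫ μ ≫ l := by rw [← star]
    _ = (S ▷ H) ≫ (S ▷ H) ≫ μ ≫ l := by rw [dia]
    _ = ((S ≫ S) ▷ H) ≫ μ ≫ l := by simp [comp_whiskerRight]
    _ = μ ≫ l := by rw [sq]; simp
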